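/- Under the hypotheses of the Klebanov identity, the characteristic functions of X₁ and X₂ have nearly equal moduli: | |f₁(2t)| − |f₂(2t)| | ≤ 2ε for all ‖t‖₁ ≤ T. -/

import Mathlib

open MeasureTheory ProbabilityTheory

/-- The characteristic function `f_X(t) = E[exp(i tᵀ X)]`. -/
noncomputable def charFun' {Ω : Type*} [MeasurableSpace Ω] (μ : Measure Ω) {d : ℕ}
    (X : Ω → EuclideanSpace ℝ (Fin d)) (t : EuclideanSpace ℝ (Fin d)) : ℂ :=
  ∫ ω, Complex.exp (Complex.I * ((inner ℝ t (X ω) : ℝ) : ℂ)) ∂μ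

/-- The joint characteristic function `f_{U,V}(t₁,t₂) = E[exp(i t₁ᵀU + i t₂ᵀV)]`. -/
noncomputable def jointCharFun' {Ω : Type*} [MeasurableSpace Ω] (μ : Measure Ω) {d : ℕ}
    (U V : Ω → EuclideanSpace ℝ (Fin d))
    (t₁ t₂ : EuclideanSpace ℝ (Fin d)) : ℂ :=
  ∫ ω, Complex.exp (Complex.I * ((inner ℝ t₁ (U ω) + inner ℝ t₂ (V ω) : ℝ) : ℂ)) ∂μ

lemma charFun'_neg {Ω : Type*} [MeasurableSpace Ω] (μ : Measure Ω) {d : ℕ}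
    (X : Ω → EuclideanSpace ℝ (Fin d)) (t : EuclideanSpace ℝ (Fin d)) :
    charFun' μ X (-t) = (starRingEnd ℂ) (charFun' μ X t) := by
  unfold charFun'
  rw [← integral_conj]
  congr 1
  ext ω
  rw [← Complex.exp_conj]
  congr 1
  simp [inner_neg_left]

/-- Under the Klebanov hypotheses (`X₁ ⟂ X₂` and `X₁+X₂, X₁−X₂`
(ε,T)-dependent), the moduli of `f₁` and `f₂` are nearly equal:
`||f₁(2t)| − |f₂(2t)|| ≤ 2ε` for `‖t‖₁ ≤ T`. -/
theorem klebanov_moduli_close {Ω : Type*} [MeasurableSpace Ω]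
    (μ : Measure Ω) [IsProbabilityMeasure μ] {d : ℕ}
    (X₁ X₂ : Ω → EuclideanSpace ℝ (Fin d))
    (hX₁ : Measurable X₁) (hX₂ : Measurable X₂)
    (hind : IndepFun X₁ X₂ μ)
    (ε T : ℝ) (hε : 0 ≤ ε) (hT : 0 < T)
    (hdep : ∀ t₁ t₂ : EuclideanSpace ℝ (Fin d),
      (∑ i, |t₁ i|) ≤ T → (∑ i, |t₂ i|) ≤ T →
      ‖(jointCharFun' μ (fun ω => X₁ ω + X₂ ω) (fun ω => X₁ ω - X₂ ω) t₁ t₂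
          - charFun' μ (fun ω => X₁ ω + X₂ ω) t₁
            * charFun' μ (fun ω => X₁ ω - X₂ ω) t₂)‖ ≤ ε) :
    ∀ t : EuclideanSpace ℝ (Fin d), (∑ i, |t i|) ≤ T →
      |‖charFun' μ X₁ (2 • t)‖ - ‖charFun' μ X₂ (2 • t)‖| ≤ 2 * ε := by
  intro t ht
  have hnt : (∑ i, |(-t) i|) ≤ T := by simpa [abs_neg] using ht
  have h1 := hdep t t ht ht
  have h2 := hdep t (-t) ht hnt
  -- joint char fun at (t,t) is f₁(2t)
  have e1 : jointCharFun' μ (fun ω => X₁ ω + X₂ ω) (fun ω => X₁ ω - X₂ ω) t t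
      = charFun' μ X₁ (2 • t) := by
    unfold jointCharFun' charFun'
    congr 1
    ext ω
    congr 2
    push_cast
    congr 1
    rw [inner_add_right, inner_sub_right, two_smul, inner_add_left]
    push_cast
    ring
  have e2 : jointCharFun' μ (fun ω => X₁ ω + X₂ ω) (fun ω => X₁ ω - X₂ ω) t (-t)
      = charFun' μ X₂ (2 • t) := by
    unfold jointCharFun' charFun'
    congr 1
    ext ω
    congr 2
    push_cast
    congr 1
    rw [inner_add_right, inner_neg_left, inner_sub_right, two_smul, inner_add_left]
    push_cast
    ring
  rw [e1] at h1
  rw [e2] at h2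
  set A := charFun' μ (fun ω => X₁ ω + X₂ ω) t * charFun' μ (fun ω => X₁ ω - X₂ ω) t with hA
  set B := charFun' μ (fun ω => X₁ ω + X₂ ω) t * charFun' μ (fun ω => X₁ ω - X₂ ω) (-t) with hB
  have hAB : ‖A‖ = ‖B‖ := by
    rw [hA, hB, norm_mul, norm_mul, charFun'_neg, Complex.norm_conj]
  have k1 : |‖charFun' μ X₁ (2 • t)‖ - ‖A‖| ≤ ε :=
    le_trans (abs_norm_sub_norm_le _ _) h1
  have k2 : |‖charFun' μ X₂ (2 • t)‖ - ‖B‖| ≤ ε :=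
    le_trans (abs_norm_sub_norm_le _ _) h2
  calc |‖charFun' μ X₁ (2 • t)‖ - ‖charFun' μ X₂ (2 • t)‖|
      = |(‖charFun' μ X₁ (2 • t)‖ - ‖A‖)
        - (‖charFun' μ X₂ (2 • t)‖ - ‖B‖)| := by rw [hAB]; ring_nf
    _ ≤ |‖charFun' μ X₁ (2 • t)‖ - ‖A‖|
        + |‖charFun' μ X₂ (2 • t)‖ - ‖B‖| := abs_sub _ _
    _ ≤ ε + ε := add_le_add k1 k2
    _ = 2 * ε := by ring
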